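/- Let K/F be cyclic Galois of degree n with Galois group ⟨σ⟩, and f(t) = t^m − Σ a_i t^i ∈ K[t;σ] not right invariant, with nonzero coefficient indices λ₁,…,λ_r. If d = gcd(m−λ₁, …, m−λ_r, n), then Nuc(S_f) = Fix(σ^d), and hence [Nuc(S_f) : F] = gcd(n, d). In particular Nuc(S_f) = F if and only if d = 1. -/

import Mathlib

open Polynomial

/-- Skew (twisted) multiplication on polynomials over `K`, representing the
multiplication of the twisted polynomial ring `K[t;σ]` with `t·a = σ(a)·t`:
`(a t^i)·(b t^j) = a σ^i(b) t^{i+j}`. -/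
noncomputable def sMul {K : Type} [Field K] (σ : K ≃+* K) (p q : K[X]) : K[X] :=
  p.sum fun i a => C a * (q.map ((σ ^ i : K ≃+* K) : K →+* K)) * X ^ i

/-- `f` is right invariant in `K[t;σ]`: `f·g ∈ R·f` for all `g`. -/
def RightInvariant {K : Type} [Field K] (σ : K ≃+* K) (f : K[X]) : Prop :=
  ∀ g : K[X], ∃ q : K[X], sMul σ f g = sMul σ q f

/-- Membership in the eigenring of `f`, i.e. the right nucleus of the Petit
algebra `S_f = K[t;σ]/K[t;σ]f` (for `f` not right invariant):
`{g | deg g < deg f ∧ f·g ∈ R·f}`. -/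
def InEigenring {K : Type} [Field K] (σ : K ≃+* K) (f g : K[X]) : Prop :=
  g.degree < f.degree ∧ ∃ q : K[X], sMul σ f g = sMul σ q f

/-- Remainder of right division by `f` in `K[t;σ]` (Petit multiplication in
`S_f` is `g ∘ h = (g·h) mod_r f`). -/
noncomputable def modRight {K : Type} [Field K] (σ : K ≃+* K) (f g : K[X]) : K[X] := by
  classical
  exact if h : ∃ r : K[X], r.degree < f.degree ∧ ∃ q : K[X], g = sMul σ q f + r
    then h.choose else 0

section Aux
variable {K : Type} [Field K]

lemma coeff_sMul_C (σ : K ≃+* K) (p : K[X]) (x : K) (j : ℕ) :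
    (sMul σ p (C x)).coeff j = p.coeff j * (σ ^ j : K ≃+* K) x := by
  classical
  unfold sMul
  rw [Polynomial.sum, finset_sum_coeff]
  simp only [Polynomial.map_C, ← C_mul, coeff_C_mul, coeff_X_pow, mul_ite, mul_one, mul_zero]
  rw [Finset.sum_ite_eq p.support j (fun i => p.coeff i * ((σ ^ i : K ≃+* K) : K →+* K) x)]
  by_cases h : j ∈ p.support
  · rw [if_pos h]; rfl
  · rw [if_neg h, notMem_support_iff.1 h, zero_mul]

lemma sMul_C_left (σ : K ≃+* K) (c : K) (f : K[X]) : sMul σ (C c) f = C c * f := by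
  unfold sMul
  rw [Polynomial.sum_C_index]
  · ext j
    simp [coeff_map]
  · simp

lemma sMul_zero_left (σ : K ≃+* K) (f : K[X]) : sMul σ 0 f = 0 := by
  unfold sMul
  exact Polynomial.sum_zero_index _

lemma coeff_sMul_high (σ : K ≃+* K) (q f : K[X]) (m : ℕ) (hf : f.natDegree ≤ m) :
    (sMul σ q f).coeff (q.natDegree + m)
      = q.leadingCoeff * (σ ^ q.natDegree : K ≃+* K) (f.coeff m) := by
  classical
  unfold sMul
  rw [Polynomial.sum, finset_sum_coeff]
  have key : ∀ i ∈ q.support,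
      (C (q.coeff i) * f.map ((σ ^ i : K ≃+* K) : K →+* K) * X ^ i).coeff (q.natDegree + m)
        = if i = q.natDegree then q.coeff i * (σ ^ i : K ≃+* K) (f.coeff m) else 0 := by
    intro i hi
    have hiN : i ≤ q.natDegree := le_natDegree_of_ne_zero (mem_support_iff.1 hi)
    rw [coeff_mul_X_pow', if_pos (le_trans hiN (Nat.le_add_right _ _)), coeff_C_mul, coeff_map]
    by_cases h : i = q.natDegree
    · subst h
      rw [if_pos rfl, Nat.add_sub_cancel_left]
      rfl
    · rw [if_neg h]
      have hlt : m < q.natDegree + m - i := by omega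
      rw [coeff_eq_zero_of_natDegree_lt (lt_of_le_of_lt hf hlt), map_zero, mul_zero]
  rw [Finset.sum_congr rfl key, Finset.sum_ite_eq' q.support q.natDegree
    (fun i => q.coeff i * (σ ^ i : K ≃+* K) (f.coeff m))]
  by_cases hq : q = 0
  · simp [hq]
  · rw [if_pos (natDegree_mem_support_of_nonzero hq)]
    rfl

lemma pow_gcd_mem {G : Type*} [Group G] {H : Subgroup G} {g : G} {A B : ℕ}
    (ha : g ^ A ∈ H) (hb : g ^ B ∈ H) : g ^ Nat.gcd A B ∈ H := by
  have key : g ^ (Nat.gcd A B : ℤ)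
      = (g ^ (A : ℤ)) ^ Nat.gcdA A B * (g ^ (B : ℤ)) ^ Nat.gcdB A B := by
    rw [← zpow_mul, ← zpow_mul, ← zpow_add, ← Nat.gcd_eq_gcd_ab]
  have hmem := mul_mem
    (Subgroup.zpow_mem H (show g ^ (A:ℤ) ∈ H by rwa [zpow_natCast]) (Nat.gcdA A B))
    (Subgroup.zpow_mem H (show g ^ (B:ℤ) ∈ H by rwa [zpow_natCast]) (Nat.gcdB A B))
  rw [← key, zpow_natCast] at hmem
  exact hmem

lemma pow_finsetgcd_mem {G : Type*} [Group G] {H : Subgroup G} {g : G}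
    (s : Finset ℕ) (v : ℕ → ℕ) (h : ∀ i ∈ s, g ^ (v i) ∈ H) : g ^ (s.gcd v) ∈ H := by
  classical
  induction s using Finset.induction_on with
  | empty => simpa using one_mem H
  | @insert a s ha ih =>
      rw [Finset.gcd_insert]
      exact pow_gcd_mem (h a (Finset.mem_insert_self a s))
        (ih fun i hi => h i (Finset.mem_insert_of_mem hi))

end Aux

/-- Theorem 2.5: let `K/F` be cyclic Galois of degree `n` with Galois group `⟨σ⟩`,
`f(t) = t^m - Σ a_i t^i ∈ K[t;σ]` not right invariant, and
`d = gcd(m-λ₁,…,m-λ_r,n)` where `λ₁,…,λ_r` are the nonzero coefficient indices.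
Then `Nuc(S_f) = Fix(σ^d)`, hence `[Nuc(S_f):F] = gcd(n,d)`; in particular
`Nuc(S_f) = F` iff `d = 1`. -/
theorem nucleus_eq_fix_gcd (F K : Type) [Field F] [Field K] [Algebra F K]
    [IsGalois F K] [FiniteDimensional F K] [DecidableEq K]
    (n : ℕ) (hn : Module.finrank F K = n)
    (σ : K ≃ₐ[F] K) (hgen : ∀ τ : K ≃ₐ[F] K, τ ∈ Subgroup.zpowers σ)
    (σr : K ≃+* K) (hσr : ∀ x, σr x = σ x)
    (m : ℕ) (hm : 2 ≤ m) (a : ℕ → K) (f : K[X])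
    (hf : f = X ^ m - ∑ i ∈ Finset.range m, C (a i) * X ^ i)
    (hri : ¬ RightInvariant σr f)
    (d : ℕ)
    (hd : d = Nat.gcd
      (Finset.gcd ((Finset.range m).filter fun i => a i ≠ 0) fun i => m - i) n) :
    {x : K | InEigenring σr f (C x)} =
        (IntermediateField.fixedField (Subgroup.zpowers (σ ^ d)) : Set K) ∧
      Module.finrank F
        (IntermediateField.fixedField (Subgroup.zpowers (σ ^ d))) = Nat.gcd n d ∧
      ({x : K | InEigenring σr f (C x)} = ((⊥ : IntermediateField F K) : Set K) ↔
        d = 1) := by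
  classical
  set S : Finset ℕ := (Finset.range m).filter fun i => a i ≠ 0 with hS
  -- powers of σr agree with powers of σ
  have hpow : ∀ (k : ℕ) (y : K), (σr ^ k : K ≃+* K) y = (σ ^ k : K ≃ₐ[F] K) y := by
    intro k
    induction k with
    | zero => intro y; rfl
    | succ k ih =>
        intro y
        rw [pow_succ, pow_succ]
        show (σr ^ k) (σr y) = (σ ^ k) (σ y)
        rw [hσr, ih]
  -- coefficients of f
  have hsumc : ∀ j, (∑ i ∈ Finset.range m, C (a i) * X ^ i).coeff j
      = if j < m then a j else 0 := by
    intro j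
    rw [finset_sum_coeff]
    simp only [coeff_C_mul, coeff_X_pow, mul_ite, mul_one, mul_zero]
    rw [Finset.sum_ite_eq (Finset.range m) j (fun i => a i)]
    simp [Finset.mem_range]
  have hcoeff : ∀ j, f.coeff j
      = (if j = m then 1 else 0) - (if j < m then a j else 0) := by
    intro j
    rw [hf, coeff_sub, coeff_X_pow, hsumc]
  have hfm : f.coeff m = 1 := by rw [hcoeff]; simp
  have hflt : ∀ j, j < m → f.coeff j = -(a j) := by
    intro j hj; rw [hcoeff, if_neg (by omega), if_pos hj, zero_sub]
  have hfgt : ∀ j, m < j → f.coeff j = 0 := by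
    intro j hj; rw [hcoeff, if_neg (by omega), if_neg (by omega), sub_zero]
  have hfne : f ≠ 0 := fun h => by simp [h] at hfm
  have hnat : f.natDegree = m := by
    apply le_antisymm
    · exact natDegree_le_iff_coeff_eq_zero.2 hfgt
    · exact le_natDegree_of_ne_zero (by rw [hfm]; exact one_ne_zero)
  have hdeg : f.degree = (m : WithBot ℕ) := by
    rw [degree_eq_natDegree hfne, hnat]
  -- main characterization
  have hchar : ∀ x : K, InEigenring σr f (C x) ↔
      ∀ j ∈ S, (σ ^ (m - j) : K ≃ₐ[F] K) x = x := by
    intro x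
    constructor
    · rintro ⟨-, q, hq⟩ j hj
      rw [hS, Finset.mem_filter, Finset.mem_range] at hj
      obtain ⟨hjm, haj⟩ := hj
      by_cases hq0 : q = 0
      · -- then x = 0
        rw [hq0, sMul_zero_left] at hq
        have h0 : f.coeff m * (σr ^ m : K ≃+* K) x = 0 := by
          rw [← coeff_sMul_C σr f x m, hq, coeff_zero]
        rw [hfm, one_mul] at h0
        have hx0 : x = 0 := (map_eq_zero_iff _ (σr ^ m : K ≃+* K).injective).1 h0
        rw [hx0, map_zero]
      · -- q has degree 0
        have hhigh := coeff_sMul_high σr q f m (le_of_eq hnat)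
        have hN : q.natDegree = 0 := by
          by_contra hN0
          have hz : f.coeff (q.natDegree + m) = 0 := hfgt _ (by omega)
          have hlow : (sMul σr f (C x)).coeff (q.natDegree + m)
              = f.coeff (q.natDegree + m) * (σr ^ (q.natDegree + m) : K ≃+* K) x :=
            coeff_sMul_C σr f x _
          rw [hq, hhigh] at hlow
          rw [hz, zero_mul, hfm, map_one, mul_one] at hlow
          exact hq0 (leadingCoeff_eq_zero.1 hlow)
        obtain ⟨c, rfl⟩ : ∃ c, q = C c := ⟨q.coeff 0, eq_C_of_natDegree_eq_zero hN⟩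
        rw [sMul_C_left] at hq
        -- coefficient at m : σr^m x = c
        have hmc : (σr ^ m : K ≃+* K) x = c := by
          have h1 := congrArg (fun p => p.coeff m) hq
          simp only [coeff_sMul_C, coeff_C_mul, hfm, one_mul, mul_one] at h1
          exact h1
        -- coefficient at j : σr^j x = c
        have hjc : (σr ^ j : K ≃+* K) x = c := by
          have h1 := congrArg (fun p => p.coeff j) hq
          simp only [coeff_sMul_C, coeff_C_mul] at h1
          rw [hflt j hjm] at h1
          exact mul_left_cancel₀ (neg_ne_zero.2 haj) (h1.trans (mul_comm c (-(a j))))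
        -- conclude
        have hsplit : (σr ^ j : K ≃+* K) ((σr ^ (m - j) : K ≃+* K) x)
            = (σr ^ j : K ≃+* K) x := by
          have : (σr ^ (j + (m - j)) : K ≃+* K) x
              = (σr ^ j : K ≃+* K) ((σr ^ (m - j) : K ≃+* K) x) := by
            rw [pow_add]; rfl
          rw [← this, show j + (m - j) = m by omega, hmc, hjc]
        have := (σr ^ j : K ≃+* K).injective hsplit
        rw [← hpow, this]
    · intro h
      constructor
      · rw [hdeg]
        exact lt_of_le_of_lt degree_C_le (by exact_mod_cast (by omega : 0 < m))
      · refine ⟨C ((σr ^ m : K ≃+* K) x), ?_⟩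
        rw [sMul_C_left]
        ext j
        rw [coeff_sMul_C, coeff_C_mul]
        rcases lt_trichotomy j m with hjm | rfl | hjm
        · rw [hflt j hjm]
          by_cases haj : a j = 0
          · rw [haj]; ring
          · have hx : (σ ^ (m - j) : K ≃ₐ[F] K) x = x :=
              h j (by rw [hS]; exact Finset.mem_filter.2 ⟨Finset.mem_range.2 hjm, haj⟩)
            have hfix : (σr ^ (m - j) : K ≃+* K) x = x := by rw [hpow]; exact hx
            have hjm' : (σr ^ m : K ≃+* K) x = (σr ^ j : K ≃+* K) x := by
              have h2 : (σr ^ (j + (m - j)) : K ≃+* K) x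
                  = (σr ^ j : K ≃+* K) ((σr ^ (m - j) : K ≃+* K) x) := by
                rw [pow_add]; rfl
              rw [show m = j + (m - j) by omega, h2, hfix]
            rw [hjm']; ring
        · rw [hfm]; ring
        · rw [hfgt j hjm]; ring
  -- group-theoretic facts
  have hn0 : n ≠ 0 := by
    have := Module.finrank_pos (R := F) (M := K)
    omega
  have hcard : Fintype.card (K ≃ₐ[F] K) = n := by
    rw [← Nat.card_eq_fintype_card, IsGalois.card_aut_eq_finrank, hn]
  have hσn : σ ^ n = 1 := by rw [← hcard]; exact pow_card_eq_one
  have htop : Subgroup.zpowers σ = ⊤ := (Subgroup.eq_top_iff' _).2 hgen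
  have horder : orderOf σ = n := by
    rw [← Nat.card_zpowers, htop, Subgroup.card_top, Nat.card_eq_fintype_card, hcard]
  -- fixed points of σ^d vs the eigenring condition
  have hstab : ∀ x : K, ((σ ^ d : K ≃ₐ[F] K) x = x ↔ ∀ j ∈ S, (σ ^ (m - j) : K ≃ₐ[F] K) x = x) := by
    intro x
    constructor
    · intro hx j hj
      have h1 : d ∣ S.gcd (fun i => m - i) := hd ▸ Nat.gcd_dvd_left _ _
      have h2 : S.gcd (fun i => m - i) ∣ m - j := Finset.gcd_dvd hj
      obtain ⟨k, hk⟩ := h1.trans h2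
      have hmem : σ ^ d ∈ MulAction.stabilizer (K ≃ₐ[F] K) x := by
        rw [MulAction.mem_stabilizer_iff, AlgEquiv.smul_def]; exact hx
      have := pow_mem hmem k
      rw [← pow_mul, ← hk, MulAction.mem_stabilizer_iff, AlgEquiv.smul_def] at this
      exact this
    · intro h
      have hmem : σ ^ d ∈ MulAction.stabilizer (K ≃ₐ[F] K) x := by
        rw [hd]
        apply pow_gcd_mem
        · exact pow_finsetgcd_mem S (fun i => m - i) fun j hj => by
            rw [MulAction.mem_stabilizer_iff, AlgEquiv.smul_def]; exact h j hj
        · rw [hσn]; exact one_mem _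
      rw [MulAction.mem_stabilizer_iff, AlgEquiv.smul_def] at hmem
      exact hmem
  -- membership in the fixed field
  have hfix : ∀ x : K, x ∈ IntermediateField.fixedField (Subgroup.zpowers (σ ^ d))
      ↔ (σ ^ d : K ≃ₐ[F] K) x = x := by
    intro x
    constructor
    · intro h
      exact h ⟨σ ^ d, Subgroup.mem_zpowers _⟩
    · intro h g
      have hmem : σ ^ d ∈ MulAction.stabilizer (K ≃ₐ[F] K) x := by
        rw [MulAction.mem_stabilizer_iff, AlgEquiv.smul_def]; exact h
      obtain ⟨k, hk⟩ := g.2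
      have hk' : (σ ^ d) ^ k = (g : K ≃ₐ[F] K) := hk
      have h2 := Subgroup.zpow_mem _ hmem k
      rw [hk', MulAction.mem_stabilizer_iff] at h2
      exact h2
  -- Part 1
  have part1 : {x : K | InEigenring σr f (C x)}
      = (IntermediateField.fixedField (Subgroup.zpowers (σ ^ d)) : Set K) := by
    ext x
    rw [Set.mem_setOf_eq, hchar x, SetLike.mem_coe, hfix x, hstab x]
  -- Part 2
  have part2 : Module.finrank F
      (IntermediateField.fixedField (Subgroup.zpowers (σ ^ d))) = Nat.gcd n d := by
    have h1 : Module.finrank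
        (IntermediateField.fixedField (Subgroup.zpowers (σ ^ d))) K
        = Fintype.card (Subgroup.zpowers (σ ^ d)) :=
      (IntermediateField.finrank_fixedField_eq_card _).trans Nat.card_eq_fintype_card
    rw [Fintype.card_zpowers, orderOf_pow, horder] at h1
    have hg : Nat.gcd n d ∣ n := Nat.gcd_dvd_left _ _
    have hmul : Module.finrank F (IntermediateField.fixedField (Subgroup.zpowers (σ ^ d)))
        * Module.finrank (IntermediateField.fixedField (Subgroup.zpowers (σ ^ d))) K
        = n := by
      rw [Module.finrank_mul_finrank, hn]
    rw [h1] at hmul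
    have hgpos : 0 < Nat.gcd n d := Nat.pos_of_ne_zero fun h => by
      rw [Nat.gcd_eq_zero_iff] at h; exact hn0 h.1
    have hq : 0 < n / Nat.gcd n d := Nat.div_pos (Nat.le_of_dvd (by omega) hg) hgpos
    exact Nat.eq_of_mul_eq_mul_right hq (by rw [hmul, Nat.mul_div_cancel' hg])
  refine ⟨part1, part2, ?_⟩
  -- Part 3
  constructor
  · intro hset
    rw [part1] at hset
    have hbot : IntermediateField.fixedField (Subgroup.zpowers (σ ^ d))
        = (⊥ : IntermediateField F K) := SetLike.coe_injective hset
    rw [hbot, IntermediateField.finrank_bot] at part2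
    have hdn : d ∣ n := hd ▸ Nat.gcd_dvd_right _ _
    have : Nat.gcd n d = d := Nat.gcd_eq_right hdn
    omega
  · intro hd1
    have hgcd1 : Nat.gcd n d = 1 := by rw [hd1, Nat.gcd_one_right]
    rw [hgcd1] at part2
    have hbot := IntermediateField.finrank_eq_one_iff.1 part2
    rw [part1, hbot]
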